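/- For all integers i ≥ 0, k ≥ 1 and n ≥ 0, Φ_{k+1}(Δ^i S_n)·H_{k−1}(Δ^i S_{n+1}) = Φ_k(Δ^i S_n)·H_k(Δ^i S_{n+1}) − Φ_k(Δ^i S_{n+1})·H_k(Δ^i S_n). -/
import Mathlib


/-- Forward difference operator: `(fd u) n = u (n+1) - u n`.
Iterated differences are `fd^[i] u`. -/
def fd (u : ℕ → ℝ) : ℕ → ℝ := fun n => u (n + 1) - u n

/-- Hankel-type determinant `H_k(u_n)` (depending on the fixed integer `m`):
the determinant of the `k × k` matrix whose `(i,j)` entry is `Δ^{i·m} u_{n+j}`.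
By convention `H_k = 0` for `k < 0`, and `H_0 = 1` (empty determinant). -/
noncomputable def Hd (m : ℕ) (u : ℕ → ℝ) (k : ℤ) (n : ℕ) : ℝ :=
  if k < 0 then 0
  else Matrix.det (Matrix.of fun i j : Fin k.toNat => fd^[i.val * m] u (n + j.val))

/-- Determinant `Φ_k(u_n)`: the `k × k` determinant whose first row is
`(n, n+1, …, n+k−1)` and whose `i`-th row (`1 ≤ i ≤ k−1`) is
`(Δ^{(i−1)m} u_n, …, Δ^{(i−1)m} u_{n+k−1})`. `Φ_0 = 1` (empty determinant). -/
noncomputable def Phi (m : ℕ) (u : ℕ → ℝ) (k : ℕ) (n : ℕ) : ℝ :=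
  Matrix.det (Matrix.of fun i j : Fin k =>
    if i.val = 0 then ((n + j.val : ℕ) : ℝ) else fd^[(i.val - 1) * m] u (n + j.val))

open Matrix Equiv in
theorem det_two_cols {R : Type*} [CommRing R] {N : ℕ} (v w : Fin (N+2) → R) :
    (Matrix.of fun i j : Fin (N+2) => if j = 0 then v i else if j = Fin.last (N+1) then w i
      else if i = j then (1:R) else 0).det
    = v 0 * w (Fin.last (N+1)) - v (Fin.last (N+1)) * w 0 := by
  set X : Matrix (Fin (N+2)) (Fin (N+2)) R := Matrix.of fun i j => if j = 0 then v i
      else if j = Fin.last (N+1) then w i else if i = j then (1:R) else 0 with hX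
  have h0l : (0 : Fin (N+2)) ≠ Fin.last (N+1) := by simp [Fin.ext_iff]
  have key : ∀ σ : Perm (Fin (N+2)), σ ∉ ({Equiv.refl _, Equiv.swap 0 (Fin.last (N+1))} :
      Finset (Perm (Fin (N+2)))) → (Perm.sign σ) • ∏ i, X (σ i) i = 0 := by
    intro σ hσ
    simp only [Finset.mem_insert, Finset.mem_singleton] at hσ
    push_neg at hσ
    by_cases hmid : ∀ j : Fin (N+2), j ≠ 0 → j ≠ Fin.last (N+1) → σ j = j
    · exfalso
      have h0 : σ 0 = 0 ∨ σ 0 = Fin.last (N+1) := by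
        by_contra hc
        push_neg at hc
        exact hc.1 (σ.injective (hmid _ hc.1 hc.2))
      have hl : σ (Fin.last (N+1)) = 0 ∨ σ (Fin.last (N+1)) = Fin.last (N+1) := by
        by_contra hc
        push_neg at hc
        exact hc.2 (σ.injective (hmid _ hc.1 hc.2))
      rcases h0 with h0 | h0
      · have hl' : σ (Fin.last (N+1)) = Fin.last (N+1) := by
          rcases hl with hl | hl
          · exact absurd (σ.injective (hl.trans h0.symm)) (Ne.symm h0l)
          · exact hl
        apply hσ.1
        ext x
        by_cases hx0 : x = 0
        · simp [hx0, h0]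
        by_cases hxl : x = Fin.last (N+1)
        · simp [hxl, hl']
        · exact congrArg Fin.val (hmid x hx0 hxl)
      · have hl' : σ (Fin.last (N+1)) = 0 := by
          rcases hl with hl | hl
          · exact hl
          · exact absurd (σ.injective (h0.trans hl.symm)) h0l
        apply hσ.2
        ext x
        by_cases hx0 : x = 0
        · simp [hx0, h0, Equiv.swap_apply_left]
        by_cases hxl : x = Fin.last (N+1)
        · simp [hxl, hl', Equiv.swap_apply_right]
        · rw [show (Equiv.swap 0 (Fin.last (N+1))) x = x from
            Equiv.swap_apply_of_ne_of_ne hx0 hxl]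
          exact congrArg Fin.val (hmid x hx0 hxl)
    · push_neg at hmid
      obtain ⟨j, hj0, hjl, hj⟩ := hmid
      have hz : X (σ j) j = 0 := by
        simp only [hX, Matrix.of_apply, if_neg hj0, if_neg hjl, if_neg hj]
      rw [Finset.prod_eq_zero (f := fun i => X (σ i) i) (Finset.mem_univ j) hz, smul_zero]
  rw [Matrix.det_apply,
    ← Finset.sum_subset (Finset.subset_univ ({Equiv.refl _, Equiv.swap 0 (Fin.last (N+1))} :
      Finset (Perm (Fin (N+2))))) (fun σ _ h => key σ h)]
  have hne : (Equiv.refl (Fin (N+2))) ≠ Equiv.swap 0 (Fin.last (N+1)) := by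
    intro h
    have : (Equiv.refl (Fin (N+2))) 0 = Equiv.swap 0 (Fin.last (N+1)) 0 := by rw [h]
    rw [Equiv.refl_apply, Equiv.swap_apply_left] at this
    exact h0l this
  rw [Finset.sum_pair hne]
  have hprod : ∀ (f : Fin (N+2) → Fin (N+2)), (∀ x, x ≠ 0 → x ≠ Fin.last (N+1) → f x = x) →
      ∏ i, X (f i) i = X (f 0) 0 * X (f (Fin.last (N+1))) (Fin.last (N+1)) := by
    intro f hf
    rw [← Finset.mul_prod_erase Finset.univ _ (Finset.mem_univ 0),
      ← Finset.mul_prod_erase _ _ (Finset.mem_erase.2 ⟨Ne.symm h0l, Finset.mem_univ _⟩)]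
    rw [Finset.prod_eq_one, mul_one]
    intro x hx
    simp only [Finset.mem_erase] at hx
    rw [hf x hx.2.1 hx.1]
    simp only [hX, Matrix.of_apply, if_neg hx.1, if_neg hx.2.1, if_pos rfl]
    simp
  rw [hprod (Equiv.refl _) (fun x _ _ => rfl),
    hprod (Equiv.swap 0 (Fin.last (N+1))) (fun x h1 h2 => Equiv.swap_apply_of_ne_of_ne h1 h2)]
  simp only [Equiv.refl_apply, Equiv.swap_apply_left, Equiv.swap_apply_right]
  have e1 : X 0 0 = v 0 := by simp [hX]
  have e2 : X (Fin.last (N+1)) (Fin.last (N+1)) = w (Fin.last (N+1)) := by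
    simp [hX, Ne.symm h0l]
  have e3 : X (Fin.last (N+1)) 0 = v (Fin.last (N+1)) := by simp [hX]
  have e4 : X 0 (Fin.last (N+1)) = w 0 := by simp [hX, Ne.symm h0l]
  rw [e1, e2, e3, e4]
  simp [Equiv.Perm.sign_swap (Ne.symm (h0l ∘ Eq.symm ∘ id) : (0:Fin (N+2)) ≠ _)]
  ring

open Matrix in
theorem det_col_single {R : Type*} [CommRing R] {n : ℕ} (A : Matrix (Fin (n+1)) (Fin (n+1)) R)
    (r c : Fin (n+1)) (s : R) (h : ∀ i, A i c = if i = r then s else 0) :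
    A.det = s * (-1)^((r:ℕ)+(c:ℕ)) * (A.submatrix r.succAbove c.succAbove).det := by
  rw [det_succ_column A c, Finset.sum_eq_single r]
  · rw [h r, if_pos rfl]; ring
  · intro b _ hb; rw [h b, if_neg hb]; ring
  · simp

open Matrix in
theorem adj_entry {R : Type*} [CommRing R] {n : ℕ} (A : Matrix (Fin (n+1)) (Fin (n+1)) R)
    (r c : Fin (n+1)) :
    adjugate A c r = (-1)^((r:ℕ)+(c:ℕ)) * (A.submatrix r.succAbove c.succAbove).det := by
  rw [adjugate_apply, det_succ_row _ r, Finset.sum_eq_single c]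
  · rw [updateRow_self, Pi.single_apply, if_pos rfl, submatrix_updateRow_succAbove]
    ring
  · intro b _ hb
    rw [updateRow_self, Pi.single_apply, if_neg hb]
    ring
  · simp


open Matrix in
theorem dodgson_field {K : Type*} [Field K] {N : ℕ} (A : Matrix (Fin (N+2)) (Fin (N+2)) K)
    (hA : A.det ≠ 0) :
    A.det * (A.submatrix (fun i : Fin N => i.castSucc.succ) (fun j : Fin N => j.castSucc.succ)).det
      = (A.submatrix Fin.succ Fin.succ).det * (A.submatrix Fin.castSucc Fin.castSucc).det
        - (A.submatrix Fin.succ Fin.castSucc).det * (A.submatrix Fin.castSucc Fin.succ).det := by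
  classical
  set l : Fin (N+2) := Fin.last (N+1) with hl
  have h0l : (0 : Fin (N+2)) ≠ l := by simp [hl, Fin.ext_iff]
  set X : Matrix (Fin (N+2)) (Fin (N+2)) K := Matrix.of fun i j =>
    if j = 0 then adjugate A i 0 else if j = l then adjugate A i l
    else if i = j then (1:K) else 0 with hXdef
  set M : Matrix (Fin (N+2)) (Fin (N+2)) K := Matrix.of fun i j =>
    if j = 0 then A.det * (if i = 0 then 1 else 0)
    else if j = l then A.det * (if i = l then 1 else 0) else A i j with hMdef
  have hadj : ∀ i j, (∑ t, A i t * adjugate A t j) = A.det * (if i = j then 1 else 0) := by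
    intro i j
    have := congrFun (congrFun (Matrix.mul_adjugate A) i) j
    rw [Matrix.mul_apply] at this
    rw [this, Matrix.smul_apply, Matrix.one_apply, smul_eq_mul]
  have hAX : A * X = M := by
    ext i j
    rw [Matrix.mul_apply]
    by_cases hj0 : j = 0
    · subst hj0
      simp only [hXdef, hMdef, Matrix.of_apply, if_pos rfl]
      exact hadj i 0
    by_cases hjl : j = l
    · subst hjl
      simp only [hXdef, hMdef, Matrix.of_apply, if_neg hj0, if_pos rfl]
      exact hadj i l
    · simp only [hXdef, hMdef, Matrix.of_apply, if_neg hj0, if_neg hjl]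
      simp [mul_ite]
  -- det M
  have hM0 : ∀ i, M i 0 = if i = 0 then A.det else 0 := by
    intro i
    simp only [hMdef, Matrix.of_apply, if_pos rfl, mul_ite, mul_one, mul_zero]
    simp
  have hMdet1 := det_col_single M 0 0 A.det hM0
  set M1 := M.submatrix (0:Fin (N+2)).succAbove (0:Fin (N+2)).succAbove with hM1
  have hsucc_ne : ∀ i : Fin (N+1), Fin.succ i ≠ (0 : Fin (N+2)) := fun i => Fin.succ_ne_zero i
  have hslast : ∀ i : Fin (N+1), (Fin.succ i = l) ↔ (i = Fin.last N) := by
    intro i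
    rw [hl, ← Fin.succ_last, Fin.succ_inj]
  have hM1col : ∀ i : Fin (N+1), M1 i (Fin.last N) = if i = Fin.last N then A.det else 0 := by
    intro i
    simp only [hM1, Matrix.submatrix_apply, Fin.succAbove_zero]
    simp only [hMdef, Matrix.of_apply, if_neg (hsucc_ne _), mul_ite, mul_one, mul_zero]
    rw [if_congr (hslast i) rfl rfl, if_congr (hslast (Fin.last N)) rfl rfl, if_pos rfl]
  have hMdet2 := det_col_single M1 (Fin.last N) (Fin.last N) A.det hM1col
  have hinner : M1.submatrix (Fin.last N).succAbove (Fin.last N).succAbove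
      = A.submatrix (fun i : Fin N => i.castSucc.succ) (fun j : Fin N => j.castSucc.succ) := by
    ext i j
    simp only [hM1, Matrix.submatrix_apply, Fin.succAbove_zero, Fin.succAbove_last]
    have hj0 : Fin.succ (Fin.castSucc j) ≠ (0 : Fin (N+2)) := Fin.succ_ne_zero _
    have hjl : Fin.succ (Fin.castSucc j) ≠ l := by
      rw [Ne, hslast]
      exact fun h => absurd h (Fin.castSucc_lt_last j).ne
    simp only [hMdef, Matrix.of_apply, if_neg hj0, if_neg hjl]
  have hMdet : M.det = A.det * A.det *
      (A.submatrix (fun i : Fin N => i.castSucc.succ) (fun j : Fin N => j.castSucc.succ)).det := by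
    rw [hMdet1, hMdet2, hinner]
    simp only [Fin.val_zero, pow_zero, Fin.val_last]
    rw [show ((-1 : K))^(N+N) = 1 from Even.neg_one_pow ⟨N, rfl⟩]
    ring
  -- det X
  have hXdet : X.det = adjugate A 0 0 * adjugate A l l - adjugate A l 0 * adjugate A 0 l := by
    rw [hXdef, hl]
    exact det_two_cols (fun i => adjugate A i 0) (fun i => adjugate A i (Fin.last (N+1)))
  -- adjugate corners
  have e00 : adjugate A 0 0 = (A.submatrix Fin.succ Fin.succ).det := by
    have := adj_entry A 0 0
    simpa [Fin.succAbove_zero] using this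
  have ell : adjugate A l l = (A.submatrix Fin.castSucc Fin.castSucc).det := by
    have := adj_entry A l l
    rw [this, hl, Fin.succAbove_last]
    rw [show ((-1 : K))^((Fin.last (N+1) : ℕ) + (Fin.last (N+1) : ℕ)) = 1 from
      Even.neg_one_pow ⟨N+1, by rw [Fin.val_last]⟩]
    ring
  have el0 : adjugate A l 0 = (-1 : K)^(N+1) * (A.submatrix Fin.succ Fin.castSucc).det := by
    have := adj_entry A 0 l
    rw [this, hl, Fin.succAbove_zero, Fin.succAbove_last]
    simp [Fin.val_last]
  have e0l : adjugate A 0 l = (-1 : K)^(N+1) * (A.submatrix Fin.castSucc Fin.succ).det := by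
    have := adj_entry A l 0
    rw [this, hl, Fin.succAbove_zero, Fin.succAbove_last]
    simp [Fin.val_last]
  -- combine
  have hdetprod : A.det * X.det = M.det := by rw [← hAX, det_mul]
  rw [hMdet] at hdetprod
  have hX' : X.det = A.det *
      (A.submatrix (fun i : Fin N => i.castSucc.succ) (fun j : Fin N => j.castSucc.succ)).det := by
    apply mul_left_cancel₀ hA
    rw [hdetprod]; ring
  rw [← hX', hXdet, e00, ell, el0, e0l]
  have hsign : ((-1 : K)^(N+1)) * ((-1 : K)^(N+1)) = 1 := by
    rw [← pow_add]
    exact Even.neg_one_pow ⟨N+1, rfl⟩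
  calc (A.submatrix Fin.succ Fin.succ).det * (A.submatrix Fin.castSucc Fin.castSucc).det
        - (-1:K)^(N+1) * (A.submatrix Fin.succ Fin.castSucc).det *
          ((-1:K)^(N+1) * (A.submatrix Fin.castSucc Fin.succ).det)
      = (A.submatrix Fin.succ Fin.succ).det * (A.submatrix Fin.castSucc Fin.castSucc).det
        - ((-1:K)^(N+1) * (-1:K)^(N+1)) * ((A.submatrix Fin.succ Fin.castSucc).det *
          (A.submatrix Fin.castSucc Fin.succ).det) := by ring
    _ = _ := by rw [hsign]; ring

open Matrix Polynomial in
theorem dodgson_real {N : ℕ}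
    (A : Matrix (Fin (N+2)) (Fin (N+2)) ℝ) :
    A.det * (A.submatrix (fun i : Fin N => i.castSucc.succ) (fun j : Fin N => j.castSucc.succ)).det
      = (A.submatrix Fin.succ Fin.succ).det * (A.submatrix Fin.castSucc Fin.castSucc).det
        - (A.submatrix Fin.succ Fin.castSucc).det * (A.submatrix Fin.castSucc Fin.succ).det := by
  classical
  set B : Matrix (Fin (N+2)) (Fin (N+2)) (Polynomial ℝ) := Matrix.of fun i j =>
    Polynomial.C (A i j) + (if i = j then Polynomial.X else 0) with hBdef
  have hBchar : B = charmatrix (-A) := by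
    ext i j
    simp only [hBdef, Matrix.of_apply, charmatrix_apply, Matrix.diagonal_apply,
      Matrix.map_apply, Matrix.neg_apply, map_neg, sub_neg_eq_add]
    by_cases h : i = j <;> simp [h, add_comm]
  have hBdet : B.det ≠ 0 := by
    rw [hBchar]
    exact (Matrix.charpoly_monic (-A)).ne_zero
  set K := FractionRing (Polynomial ℝ)
  set φ : Polynomial ℝ →+* K := algebraMap (Polynomial ℝ) K with hφ
  have hφinj : Function.Injective φ := IsFractionRing.injective (Polynomial ℝ) K
  have hmapdet : ∀ {n : ℕ} (g : Polynomial ℝ →+* K) (M : Matrix (Fin n) (Fin n) (Polynomial ℝ)),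
      (M.map g).det = g M.det := by
    intro n g M
    rw [RingHom.map_det, RingHom.mapMatrix_apply]
  have hBK : (B.map φ).det ≠ 0 := by
    rw [hmapdet]
    intro h
    exact hBdet (hφinj (by simpa using h))
  have hfield := dodgson_field (B.map φ) hBK
  simp only [Matrix.submatrix_map, hmapdet, ← map_mul φ, ← map_sub φ] at hfield
  have hP := hφinj hfield
  -- evaluate at 0
  set ψ : Polynomial ℝ →+* ℝ := Polynomial.evalRingHom 0 with hψ
  have hBA : B.map ψ = A := by
    ext i j
    simp only [hBdef, Matrix.map_apply, Matrix.of_apply, hψ, map_add, eval_C, coe_evalRingHom]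
    by_cases h : i = j <;> simp [h]
  have hmapdet' : ∀ {n : ℕ} (M : Matrix (Fin n) (Fin n) (Polynomial ℝ)),
      ψ M.det = (M.map ψ).det := by
    intro n M
    rw [RingHom.map_det, RingHom.mapMatrix_apply]
  have := congrArg ψ hP
  simp only [map_mul ψ, map_sub ψ, hmapdet', ← Matrix.submatrix_map, hBA] at this
  exact this

/-- Cast lemma for `Hd` at natural arguments. -/
theorem Hd_natCast (m : ℕ) (u : ℕ → ℝ) (j n : ℕ) :
    Hd m u (j : ℤ) n
      = Matrix.det (Matrix.of fun i j' : Fin j => fd^[i.val * m] u (n + j'.val)) := by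
  rw [Hd, if_neg (by exact not_lt.2 (Int.natCast_nonneg j))]
  rfl

/-- For `i ≥ 0`, `k ≥ 1`, `n ≥ 0`: `Φ_{k+1}(Δ^i S_n) H_{k−1}(Δ^i S_{n+1})
= Φ_k(Δ^i S_n) H_k(Δ^i S_{n+1}) − Φ_k(Δ^i S_{n+1}) H_k(Δ^i S_n)`. -/
theorem stmt_6 (m : ℕ) (hm : 1 ≤ m) (S : ℕ → ℝ) (i k n : ℕ) (hk : 1 ≤ k) :
    Phi m (fd^[i] S) (k + 1) n * Hd m (fd^[i] S) ((k : ℤ) - 1) (n + 1) =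
      Phi m (fd^[i] S) k n * Hd m (fd^[i] S) (k : ℤ) (n + 1) -
        Phi m (fd^[i] S) k (n + 1) * Hd m (fd^[i] S) (k : ℤ) n := by
  set u : ℕ → ℝ := fd^[i] S with hu
  obtain ⟨K, rfl⟩ : ∃ K, k = K + 1 := ⟨k - 1, (Nat.succ_pred_eq_of_pos hk).symm⟩
  set A : Matrix (Fin (K+2)) (Fin (K+2)) ℝ := Matrix.of fun i j =>
    if i.val = 0 then ((n + j.val : ℕ) : ℝ) else fd^[(i.val - 1) * m] u (n + j.val) with hA
  have hcast : ((K + 1 : ℕ) : ℤ) - 1 = ((K : ℕ) : ℤ) := by push_cast; ring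
  rw [hcast, Hd_natCast, Hd_natCast, Hd_natCast]
  have hdodg := dodgson_real A
  have h1 : A.submatrix (fun i : Fin K => i.castSucc.succ) (fun j : Fin K => j.castSucc.succ)
      = Matrix.of fun i j' : Fin K => fd^[i.val * m] u (n + 1 + j'.val) := by
    ext a b
    simp only [hA, Matrix.submatrix_apply, Matrix.of_apply, Fin.val_succ, Fin.coe_castSucc]
    rw [if_neg (Nat.succ_ne_zero _), Nat.add_sub_cancel, show n + (b.val + 1) = n + 1 + b.val from by omega]
  have h2 : A.submatrix Fin.succ Fin.succ
      = Matrix.of fun i j' : Fin (K+1) => fd^[i.val * m] u (n + 1 + j'.val) := by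
    ext a b
    simp only [hA, Matrix.submatrix_apply, Matrix.of_apply, Fin.val_succ]
    rw [if_neg (Nat.succ_ne_zero _), Nat.add_sub_cancel, show n + (b.val + 1) = n + 1 + b.val from by omega]
  have h3 : A.submatrix Fin.castSucc Fin.castSucc
      = Matrix.of fun a b : Fin (K+1) =>
        if a.val = 0 then ((n + b.val : ℕ) : ℝ) else fd^[(a.val - 1) * m] u (n + b.val) := by
    ext a b
    simp only [hA, Matrix.submatrix_apply, Matrix.of_apply, Fin.coe_castSucc]
  have h4 : A.submatrix Fin.succ Fin.castSucc
      = Matrix.of fun i j' : Fin (K+1) => fd^[i.val * m] u (n + j'.val) := by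
    ext a b
    simp only [hA, Matrix.submatrix_apply, Matrix.of_apply, Fin.val_succ, Fin.coe_castSucc]
    rw [if_neg (Nat.succ_ne_zero _), Nat.add_sub_cancel]
  have h5 : A.submatrix Fin.castSucc Fin.succ
      = Matrix.of fun a b : Fin (K+1) =>
        if a.val = 0 then ((n + 1 + b.val : ℕ) : ℝ)
        else fd^[(a.val - 1) * m] u (n + 1 + b.val) := by
    ext a b
    simp only [hA, Matrix.submatrix_apply, Matrix.of_apply, Fin.coe_castSucc, Fin.val_succ]
    rw [show n + (b.val + 1) = n + 1 + b.val from by omega]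
  rw [h1, h2, h3, h4, h5] at hdodg
  show A.det * _ = _
  unfold Phi
  linear_combination hdodg
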